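/- Assume a_{ii} = 2 for all i. For every integer k ≥ 0 and every 1 ≤ i ≤ n, let v = (v_1, …, v_n) := (R_1∘⋯∘R_n)^k(β_i^+) ∈ ℤ^n (the coordinates of c^k β_i^+ in the basis of simple roots). Then (S_1∘⋯∘S_n)^k(e_i) = Σ_{j=1}^n v_j (e_j + Σ_{ℓ<j} a_{ℓj} e_ℓ). Equivalently, in the weight lattice, c^k ω_i = Σ_{j=1}^n [c^k β_i^+ : α_j] (ω_j + Σ_{ℓ<j} a_{ℓj} ω_ℓ), where c = s_1⋯s_n and [β : α_j] denotes the coefficient of α_j in the simple-root expansion of β. -/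

import Mathlib

open Finset

/-- The simple reflection `s_i` of the Weyl group of `A` acting on the root lattice
in the basis of simple roots: `R_i(e_j) = e_j - a_{ij} e_i`. -/
def Rmap {n : ℕ} (A : Matrix (Fin n) (Fin n) ℤ) (i : Fin n) (v : Fin n → ℤ) : Fin n → ℤ :=
  v - (∑ j, A i j * v j) • Pi.single i (1 : ℤ)

/-- The simple reflection `s_i` acting on the weight lattice in the basis of
fundamental weights. -/
def Smap {n : ℕ} (A : Matrix (Fin n) (Fin n) ℤ) (i : Fin n) (v : Fin n → ℤ) : Fin n → ℤ :=
  v - (v i) • (fun ℓ => A ℓ i)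

/-- `R` indexed by a natural number (acting trivially out of range). -/
def Rnat {n : ℕ} (A : Matrix (Fin n) (Fin n) ℤ) (j : ℕ) (v : Fin n → ℤ) : Fin n → ℤ :=
  if h : j < n then Rmap A ⟨j, h⟩ v else v

/-- `β_i^+ = s_1 ⋯ s_{i-1} α_i` in simple root coordinates. -/
def betaPlus {n : ℕ} (A : Matrix (Fin n) (Fin n) ℤ) (i : Fin n) : Fin n → ℤ :=
  (List.range i.val).foldr (fun j v => Rnat A j v) (Pi.single i (1 : ℤ))

/-- The Coxeter element `c = s_1 ⋯ s_n` acting on the root lattice: `R_1 ∘ ⋯ ∘ R_n`. -/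
def coxR {n : ℕ} (A : Matrix (Fin n) (Fin n) ℤ) (v : Fin n → ℤ) : Fin n → ℤ :=
  (List.finRange n).foldr (fun j w => Rmap A j w) v

/-- The Coxeter element `c = s_1 ⋯ s_n` acting on the weight lattice: `S_1 ∘ ⋯ ∘ S_n`. -/
def coxS {n : ℕ} (A : Matrix (Fin n) (Fin n) ℤ) (v : Fin n → ℤ) : Fin n → ℤ :=
  (List.finRange n).foldr (fun j w => Smap A j w) v

/- auxiliary -/
def Snat {n : ℕ} (A : Matrix (Fin n) (Fin n) ℤ) (j : ℕ) (v : Fin n → ℤ) : Fin n → ℤ :=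
  if h : j < n then Smap A ⟨j, h⟩ v else v

def Tmap {n : ℕ} (A : Matrix (Fin n) (Fin n) ℤ) (v : Fin n → ℤ) : Fin n → ℤ :=
  fun ℓ => v ℓ + ∑ j ∈ Finset.univ.filter (fun j => ℓ < j), A ℓ j * v j

lemma coxR_eq_range {n : ℕ} (A : Matrix (Fin n) (Fin n) ℤ) (v : Fin n → ℤ) :
    coxR A v = (List.range n).foldr (Rnat A) v := by
  rw [coxR, ← (show (List.finRange n).map Fin.val = List.range n from List.ext_getElem (by simp) (by simp)), List.foldr_map]
  congr 1
  funext j w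
  simp [Rnat, j.isLt]

lemma coxS_eq_range {n : ℕ} (A : Matrix (Fin n) (Fin n) ℤ) (v : Fin n → ℤ) :
    coxS A v = (List.range n).foldr (Snat A) v := by
  rw [coxS, ← (show (List.finRange n).map Fin.val = List.range n from List.ext_getElem (by simp) (by simp)), List.foldr_map]
  congr 1
  funext j w
  simp [Snat, j.isLt]

lemma sum_split {n : ℕ} (f : Fin n → ℤ) (ℓ : Fin n) :
    ∑ j, f j = (∑ j ∈ Finset.univ.filter (fun j => j < ℓ), f j) + f ℓ
      + ∑ j ∈ Finset.univ.filter (fun j => ℓ < j), f j := by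
  have h1 : Finset.univ.filter (fun j => ¬ j < ℓ)
      = insert ℓ (Finset.univ.filter (fun j : Fin n => ℓ < j)) := by
    ext x
    simp only [Finset.mem_filter, Finset.mem_univ, true_and, Finset.mem_insert, not_lt,
      Fin.lt_def, Fin.le_def, Fin.ext_iff]
    omega
  rw [← Finset.sum_filter_add_sum_filter_not Finset.univ (fun j => j < ℓ), h1,
    Finset.sum_insert (by simp)]
  ring

lemma foldR_spec {n : ℕ} (A : Matrix (Fin n) (Fin n) ℤ) (hdiag : ∀ i, A i i = 2)
    (m : ℕ) (hm : m ≤ n) (v : Fin n → ℤ) :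
    (∀ ℓ : Fin n, m ≤ ℓ.val →
      ((List.range m).foldr (Rnat A) v) ℓ = v ℓ) ∧
    (∀ ℓ : Fin n, ℓ.val < m →
      ((List.range m).foldr (Rnat A) v) ℓ
        + ∑ j ∈ Finset.univ.filter (fun j => ℓ < j), A ℓ j * ((List.range m).foldr (Rnat A) v) j
      = -(v ℓ + ∑ j ∈ Finset.univ.filter (fun j => j < ℓ), A ℓ j * v j)) := by
  induction m generalizing v with
  | zero => simp
  | succ m ih =>
    have hmn : m < n := hm
    rw [List.range_succ, List.foldr_append]
    simp only [List.foldr]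
    set v' := Rnat A m v with hv'
    have hv'def : v' = Rmap A ⟨m, hmn⟩ v := by simp [hv', Rnat, hmn]
    have hv'ne : ∀ j : Fin n, j.val ≠ m → v' j = v j := by
      intro j hj
      simp [hv'def, Rmap, Pi.single_apply, Fin.ext_iff, hj]
    have hv'm : v' ⟨m, hmn⟩ = v ⟨m, hmn⟩ - ∑ j, A ⟨m, hmn⟩ j * v j := by
      simp [hv'def, Rmap, Pi.single_apply]
    obtain ⟨ih1, ih2⟩ := ih (le_of_lt hmn) v'
    constructor
    · intro ℓ hℓ
      rw [ih1 ℓ (by omega), hv'ne ℓ (by omega)]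
    · intro ℓ hℓ
      rcases Nat.lt_or_ge ℓ.val m with h | h
      · -- ℓ < m case: use ih2 and v' agrees with v at ℓ and below
        rw [ih2 ℓ h, hv'ne ℓ (by omega)]
        congr 2
        apply Finset.sum_congr rfl
        intro j hj
        simp only [Finset.mem_filter, Fin.lt_def] at hj
        rw [hv'ne j (by omega)]
      · -- ℓ = m case
        have hℓm : ℓ = ⟨m, hmn⟩ := by
          apply Fin.ext; simp; omega
        subst hℓm
        rw [ih1 _ (le_refl m), hv'm]
        have hrest : ∀ j ∈ Finset.univ.filter (fun j => (⟨m, hmn⟩ : Fin n) < j),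
            ((List.range m).foldr (Rnat A) v') j = v j := by
          intro j hj
          simp only [Finset.mem_filter, Fin.lt_def] at hj
          rw [ih1 j (by omega), hv'ne j (by omega)]
        have hsum : ∑ j ∈ Finset.univ.filter (fun j => (⟨m, hmn⟩ : Fin n) < j),
            A ⟨m, hmn⟩ j * ((List.range m).foldr (Rnat A) v') j
            = ∑ j ∈ Finset.univ.filter (fun j => (⟨m, hmn⟩ : Fin n) < j), A ⟨m, hmn⟩ j * v j :=
          Finset.sum_congr rfl (fun j hj => by rw [hrest j hj])
        rw [hsum, sum_split (fun j => A ⟨m, hmn⟩ j * v j) ⟨m, hmn⟩, hdiag]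
        ring

lemma foldS_spec {n : ℕ} (A : Matrix (Fin n) (Fin n) ℤ)
    (m : ℕ) (hm : m ≤ n) (v : Fin n → ℤ) :
    (List.range m).foldr (Snat A)
      (fun ℓ => Tmap A v ℓ - ∑ p ∈ Finset.univ.filter (fun p : Fin n => m ≤ p.val), v p * A ℓ p)
    = fun ℓ => Tmap A v ℓ - ∑ p, v p * A ℓ p := by
  induction m with
  | zero =>
    have : Finset.univ.filter (fun p : Fin n => 0 ≤ p.val) = Finset.univ := by
      ext x; simp
    simp [this]
  | succ m ih =>
    have hmn : m < n := hm
    rw [List.range_succ, List.foldr_append]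
    simp only [List.foldr]
    have hfilt : Finset.univ.filter (fun p : Fin n => m ≤ p.val)
        = insert ⟨m, hmn⟩ (Finset.univ.filter (fun p : Fin n => m + 1 ≤ p.val)) := by
      ext x
      simp [Fin.ext_iff]
      omega
    have hfilt2 : Finset.univ.filter (fun p : Fin n => m + 1 ≤ p.val)
        = Finset.univ.filter (fun p : Fin n => (⟨m, hmn⟩ : Fin n) < p) := by
      ext x; simp [Fin.lt_def]
    have hkey : Snat A m
        (fun ℓ => Tmap A v ℓ - ∑ p ∈ Finset.univ.filter (fun p : Fin n => m + 1 ≤ p.val), v p * A ℓ p)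
        = fun ℓ => Tmap A v ℓ - ∑ p ∈ Finset.univ.filter (fun p : Fin n => m ≤ p.val), v p * A ℓ p := by
      have hval : Tmap A v ⟨m, hmn⟩
          - ∑ p ∈ Finset.univ.filter (fun p : Fin n => m + 1 ≤ p.val), v p * A ⟨m, hmn⟩ p
          = v ⟨m, hmn⟩ := by
        rw [Tmap, hfilt2]
        have : ∑ p ∈ Finset.univ.filter (fun p : Fin n => (⟨m, hmn⟩ : Fin n) < p), v p * A ⟨m, hmn⟩ p
            = ∑ p ∈ Finset.univ.filter (fun p : Fin n => (⟨m, hmn⟩ : Fin n) < p), A ⟨m, hmn⟩ p * v p :=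
          Finset.sum_congr rfl (fun p _ => mul_comm _ _)
        rw [this]; ring
      funext ℓ
      simp only [Snat, hmn, dif_pos, Smap, Pi.sub_apply, Pi.smul_apply, smul_eq_mul, hval]
      rw [hfilt, Finset.sum_insert (by simp)]
      ring
    rw [hkey] at *
    exact ih (le_of_lt hmn)

lemma coxS_Tmap {n : ℕ} (A : Matrix (Fin n) (Fin n) ℤ) (hdiag : ∀ i, A i i = 2)
    (v : Fin n → ℤ) : coxS A (Tmap A v) = Tmap A (coxR A v) := by
  have h0 : (Finset.univ.filter (fun p : Fin n => n ≤ p.val)) = ∅ := by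
    ext x
    simp only [Finset.mem_filter, Finset.mem_univ, true_and, Finset.notMem_empty, iff_false, not_le]
    exact x.isLt
  have hS := foldS_spec A n (le_refl n) v
  rw [h0] at hS
  simp only [Finset.sum_empty, sub_zero] at hS
  rw [coxS_eq_range, hS]
  funext ℓ
  obtain ⟨hR1, hR2⟩ := foldR_spec A hdiag n (le_refl n) v
  have := hR2 ℓ ℓ.isLt
  rw [← coxR_eq_range] at this
  simp only [Tmap]
  rw [this, sum_split (fun p => v p * A ℓ p) ℓ]
  have hc1 : ∑ j ∈ Finset.univ.filter (fun j => j < ℓ), v j * A ℓ j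
      = ∑ j ∈ Finset.univ.filter (fun j => j < ℓ), A ℓ j * v j :=
    Finset.sum_congr rfl (fun j _ => mul_comm _ _)
  have hc2 : ∑ j ∈ Finset.univ.filter (fun j => ℓ < j), v j * A ℓ j
      = ∑ j ∈ Finset.univ.filter (fun j => ℓ < j), A ℓ j * v j :=
    Finset.sum_congr rfl (fun j _ => mul_comm _ _)
  rw [hc1, hc2, hdiag]
  ring

lemma Tmap_betaPlus {n : ℕ} (A : Matrix (Fin n) (Fin n) ℤ) (hdiag : ∀ i, A i i = 2)
    (i : Fin n) : Tmap A (betaPlus A i) = Pi.single i (1 : ℤ) := by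
  obtain ⟨h1, h2⟩ := foldR_spec A hdiag i.val (le_of_lt i.isLt) (Pi.single i (1 : ℤ))
  funext ℓ
  rcases Nat.lt_or_ge ℓ.val i.val with h | h
  · have := h2 ℓ h
    rw [Tmap, betaPlus] at *
    rw [this]
    have e1 : (Pi.single i (1 : ℤ) : Fin n → ℤ) ℓ = 0 := by
      simp [Pi.single_apply, Fin.ext_iff]; omega
    have e2 : ∑ j ∈ Finset.univ.filter (fun j => j < ℓ),
        A ℓ j * (Pi.single i (1 : ℤ) : Fin n → ℤ) j = 0 := by
      apply Finset.sum_eq_zero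
      intro j hj
      simp only [Finset.mem_filter, Fin.lt_def] at hj
      have : (Pi.single i (1 : ℤ) : Fin n → ℤ) j = 0 := by
        simp [Pi.single_apply, Fin.ext_iff]; omega
      simp [this]
    rw [e1, e2]
    ring
  · rw [Tmap, betaPlus, h1 ℓ h]
    have e2 : ∑ j ∈ Finset.univ.filter (fun j => ℓ < j),
        A ℓ j * ((List.range i.val).foldr (Rnat A) (Pi.single i (1 : ℤ))) j = 0 := by
      apply Finset.sum_eq_zero
      intro j hj
      simp only [Finset.mem_filter, Fin.lt_def] at hj
      rw [h1 j (by omega)]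
      have : (Pi.single i (1 : ℤ) : Fin n → ℤ) j = 0 := by
        simp [Pi.single_apply, Fin.ext_iff]; omega
      simp [this]
    rw [e2, add_zero]

lemma coxS_iter_Tmap {n : ℕ} (A : Matrix (Fin n) (Fin n) ℤ) (hdiag : ∀ i, A i i = 2)
    (k : ℕ) (v : Fin n → ℤ) :
    (coxS A)^[k] (Tmap A v) = Tmap A ((coxR A)^[k] v) := by
  induction k generalizing v with
  | zero => simp
  | succ k ih =>
    rw [Function.iterate_succ_apply, Function.iterate_succ_apply,
      coxS_Tmap A hdiag, ih]

lemma rhs_eq_Tmap {n : ℕ} (A : Matrix (Fin n) (Fin n) ℤ) (v : Fin n → ℤ) :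
    ∑ j : Fin n, v j •
        (Pi.single j (1 : ℤ) +
          ∑ ℓ ∈ Finset.univ.filter (fun ℓ => ℓ < j), A ℓ j • Pi.single ℓ (1 : ℤ))
      = Tmap A v := by
  funext m
  rw [Finset.sum_apply]
  simp only [Pi.smul_apply, Pi.add_apply, Finset.sum_apply, Pi.single_apply, smul_eq_mul,
    mul_ite, mul_one, mul_zero]
  have hinner : ∀ j : Fin n,
      ∑ ℓ ∈ Finset.univ.filter (fun ℓ => ℓ < j), (if m = ℓ then A ℓ j else 0)
      = if m < j then A m j else 0 := by
    intro j
    rw [Finset.sum_ite_eq (Finset.univ.filter (fun ℓ => ℓ < j)) m (fun ℓ => A ℓ j)]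
    simp
  simp only [hinner]
  rw [Tmap]
  rw [Finset.sum_congr rfl (fun j _ => mul_add (v j) _ _), Finset.sum_add_distrib]
  congr 1
  · simp [eq_comm]
  · rw [Finset.sum_filter]
    apply Finset.sum_congr rfl
    intro j _
    split <;> ring

/-- If `a_{ii} = 2` for all `i`, then for `k ≥ 0`, writing `v = c^k β_i^+` in simple
root coordinates, one has `c^k ω_i = Σ_j v_j (ω_j + Σ_{ℓ<j} a_{ℓj} ω_ℓ)`, i.e.
`c^k ω_i = Σ_j [c^k β_i^+ : α_j] (ω_j + Σ_{ℓ<j} a_{ℓj} ω_ℓ)`. -/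
theorem statement5 (n : ℕ) (hn : 1 ≤ n) (A : Matrix (Fin n) (Fin n) ℤ)
    (hdiag : ∀ i, A i i = 2) (k : ℕ) (i : Fin n) :
    (coxS A)^[k] (Pi.single i (1 : ℤ))
      = ∑ j : Fin n, ((coxR A)^[k] (betaPlus A i)) j •
          (Pi.single j (1 : ℤ) +
            ∑ ℓ ∈ Finset.univ.filter (fun ℓ => ℓ < j), A ℓ j • Pi.single ℓ (1 : ℤ)) := by
  rw [rhs_eq_Tmap A ((coxR A)^[k] (betaPlus A i)), ← coxS_iter_Tmap A hdiag,
    Tmap_betaPlus A hdiag]
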